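/- Let L = −∂_η² − (η/2)∂_η − 1 act on smooth functions on ℝ₊, and define φ₀(η) = η e^{−η²/4} and φ_{k+1} = φ_k'' for k ≥ 0. Then L φ_k = k φ_k for every k ≥ 0. -/

import Mathlib

/-- The eigenfunctions `φ_k`: `φ₀(η) = η e^{-η²/4}`, `φ_{k+1} = φ_k''`. -/
noncomputable def phiFun : ℕ → (ℝ → ℝ)
  | 0 => fun η => η * Real.exp (-η ^ 2 / 4)
  | k + 1 => deriv (deriv (phiFun k))

lemma hE_deriv (x : ℝ) :
    HasDerivAt (fun η : ℝ => Real.exp (-η ^ 2 / 4)) (-x / 2 * Real.exp (-x ^ 2 / 4)) x := by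
  have h1 : HasDerivAt (fun η : ℝ => -η ^ 2 / 4) (-x / 2) x := by
    have := ((hasDerivAt_pow 2 x).neg).div_const 4
    refine this.congr_deriv ?_
    push_cast
    ring
  have := h1.exp
  refine this.congr_deriv ?_
  ring

lemma phi0_contDiff : ContDiff ℝ (⊤ : ℕ∞) (phiFun 0) := by
  show ContDiff ℝ (⊤ : ℕ∞) (fun η : ℝ => η * Real.exp (-η ^ 2 / 4))
  have : ContDiff ℝ (⊤ : ℕ∞) (fun η : ℝ => -η ^ 2 / 4) := ((contDiff_id.pow 2).neg).div_const 4
  exact contDiff_id.mul (Real.contDiff_exp.comp this)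

lemma key (k : ℕ) : ContDiff ℝ (⊤ : ℕ∞) (phiFun k) ∧
    ∀ η : ℝ, deriv (deriv (phiFun k)) η
      = -(η / 2) * deriv (phiFun k) η - (k + 1) * phiFun k η := by
  induction k with
  | zero =>
    refine ⟨phi0_contDiff, ?_⟩
    have hd1 : ∀ x : ℝ, HasDerivAt (phiFun 0)
        ((1 - x ^ 2 / 2) * Real.exp (-x ^ 2 / 4)) x := by
      intro x
      have := (hasDerivAt_id x).mul (hE_deriv x)
      refine this.congr_deriv ?_
      simp only [id_eq]
      ring
    have hderiv1 : deriv (phiFun 0) = fun x => (1 - x ^ 2 / 2) * Real.exp (-x ^ 2 / 4) :=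
      funext fun x => (hd1 x).deriv
    intro η
    have hpoly : HasDerivAt (fun x : ℝ => 1 - x ^ 2 / 2) (-η) η := by
      have := ((hasDerivAt_pow 2 η).div_const 2).const_sub 1
      refine this.congr_deriv ?_
      push_cast; ring
    have hd2 : HasDerivAt (fun x => (1 - x ^ 2 / 2) * Real.exp (-x ^ 2 / 4))
        ((-3 * η / 2 + η ^ 3 / 4) * Real.exp (-η ^ 2 / 4)) η := by
      have := hpoly.mul (hE_deriv η)
      refine this.congr_deriv ?_
      ring
    rw [hderiv1, hd2.deriv]
    show _ = -(η / 2) * ((1 - η ^ 2 / 2) * Real.exp (-η ^ 2 / 4))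
        - ((0 : ℕ) + 1) * (η * Real.exp (-η ^ 2 / 4))
    push_cast
    ring
  | succ k ih =>
    obtain ⟨hC, hEq⟩ := ih
    set f := phiFun k with hf
    have hC1 : ContDiff ℝ (⊤ : ℕ∞) (deriv f) := (contDiff_infty_iff_deriv.mp hC).2
    have hC2 : ContDiff ℝ (⊤ : ℕ∞) (deriv (deriv f)) := (contDiff_infty_iff_deriv.mp hC1).2
    have hfd : ∀ x : ℝ, HasDerivAt f (deriv f x) x :=
      fun x => (hC.differentiable (by simp) x).hasDerivAt
    have hf1d : ∀ x : ℝ, HasDerivAt (deriv f) (deriv (deriv f) x) x :=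
      fun x => (hC1.differentiable (by simp) x).hasDerivAt
    have hphi : phiFun (k + 1) = deriv (deriv f) := rfl
    -- derivative of f'' computed from the eigen-equation, in terms of f and f' only
    have hgd : ∀ x : ℝ, HasDerivAt (deriv (deriv f))
        ((x ^ 2 / 4 - ((k : ℝ) + 3 / 2)) * deriv f x + x / 2 * ((k : ℝ) + 1) * f x) x := by
      intro x
      have heq : deriv (deriv f) = fun η => -(η / 2) * deriv f η - ((k : ℝ) + 1) * f η :=
        funext hEq
      rw [heq]
      have h1 : HasDerivAt (fun η : ℝ => -(η / 2)) (-(1 / 2)) x :=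
        ((hasDerivAt_id x).div_const 2).neg
      have h2 := (h1.mul (hf1d x)).sub ((hfd x).const_mul ((k : ℝ) + 1))
      refine h2.congr_deriv ?_
      rw [hEq x]
      ring
    have hg3 : deriv (deriv (deriv f))
        = fun x => (x ^ 2 / 4 - ((k : ℝ) + 3 / 2)) * deriv f x + x / 2 * ((k : ℝ) + 1) * f x :=
      funext fun x => (hgd x).deriv
    refine ⟨hC2, ?_⟩
    intro η
    have hpoly2 : HasDerivAt (fun x : ℝ => x ^ 2 / 4 - ((k : ℝ) + 3 / 2)) (η / 2) η := by
      have := ((hasDerivAt_pow 2 η).div_const 4).sub_const ((k : ℝ) + 3 / 2)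
      refine this.congr_deriv ?_
      push_cast; ring
    have hlin : HasDerivAt (fun x : ℝ => x / 2 * ((k : ℝ) + 1)) (((k : ℝ) + 1) / 2) η := by
      have := ((hasDerivAt_id η).div_const 2).mul_const ((k : ℝ) + 1)
      refine this.congr_deriv ?_
      ring
    have hterm : HasDerivAt
        (fun x => (x ^ 2 / 4 - ((k : ℝ) + 3 / 2)) * deriv f x + x / 2 * ((k : ℝ) + 1) * f x)
        ((η / 2) * deriv f η + (η ^ 2 / 4 - ((k : ℝ) + 3 / 2)) * deriv (deriv f) η
          + (((k : ℝ) + 1) / 2 * f η + η / 2 * ((k : ℝ) + 1) * deriv f η)) η := by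
      exact (hpoly2.mul (hf1d η)).add (hlin.mul (hfd η))
    rw [hphi]
    simp only [hg3]
    rw [hterm.deriv, hEq η]
    push_cast
    ring

theorem L_phi_eq (k : ℕ) (η : ℝ) :
    -(deriv (deriv (phiFun k)) η) - η / 2 * deriv (phiFun k) η - phiFun k η
      = k * phiFun k η := by
  have h := (key k).2 η
  rw [h]
  ring
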